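/- Let A = (a_{i,j}) and A' = (a'_{i,j}) be lower triangular n×n matrices over a field k, let C be the n×n matrix with entries c_{i,j} = 1 for i ≤ j and 0 otherwise, and for a lower triangular matrix X set P_r(X) to be the sum, over all r-element subsets {i_1 < … < i_r} of {1, …, n}, of the determinant of the principal minor of X·C with rows and columns i_1, …, i_r (up to sign, P_r(X) is the coefficient of t^{n-r} in the characteristic polynomial of X·C). If a_{h,k} = a'_{h,k} for all pairs (h,k) with k ≤ h and n − h + k ≥ r, then P_r(A) = P_r(A'). In other words, P_r does not depend on the entries a_{h,k} with n − h + k < r. -/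

import Mathlib

/-!
STATEMENT 1: For a lower triangular matrix `X`, `P_r X` is the sum of all principal `r × r`
minors of `X * C`, where `C` is the matrix with `c i j = 1` for `i ≤ j` and `0` otherwise
(up to sign, the coefficient of `t^{n-r}` in the characteristic polynomial of `X * C`).
If two lower triangular matrices `A, A'` agree on all entries `(h, k)` (1-indexed) with
`k ≤ h` and `n - h + k ≥ r`, then `P_r A = P_r A'`; i.e. `P_r` does not depend on the
entries `a_{h,k}` with `n - h + k < r`.
In `0`-indexed form, the position `(i, j)` corresponds to `(h, k) = (i+1, j+1)`.
-/

/-- The upper triangular all-ones matrix `C`. -/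
def Cmat (k : Type*) [Field k] (n : ℕ) : Matrix (Fin n) (Fin n) k :=
  Matrix.of fun i j => if i ≤ j then 1 else 0

/-- `Pcoeff r A` is the sum of all principal `r × r` minors of `A * C`. -/
noncomputable def Pcoeff {k : Type*} [Field k] {n : ℕ} (r : ℕ)
    (A : Matrix (Fin n) (Fin n) k) : k :=
  ∑ s ∈ (Finset.univ : Finset (Fin n)).powersetCard r,
    ((A * Cmat k n).submatrix (fun i : Fin s.card => s.orderEmbOfFin rfl i)
      (fun i : Fin s.card => s.orderEmbOfFin rfl i)).det

section Aux

variable {k : Type*} [Field k] {n m : ℕ}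

lemma mulC_apply (A : Matrix (Fin n) (Fin n) k) (i j : Fin n) :
    (A * Cmat k n) i j = ∑ l ∈ Finset.Iic j, A i l := by
  rw [Matrix.mul_apply]
  rw [show (Finset.Iic j) = Finset.univ.filter (· ≤ j) by ext; simp]
  rw [Finset.sum_filter]
  exact Finset.sum_congr rfl fun l _ => by
    simp only [Cmat, Matrix.of_apply]
    split <;> simp

/-- the sliceT of column indices belonging to block `t`. -/
def sliceT (f : Fin m → Fin n) (t : Fin m) : Finset (Fin n) :=
  if h : t.1 = 0 then Finset.Iic (f t)
  else Finset.Ioc (f ⟨t.1 - 1, Nat.lt_of_le_of_lt (Nat.sub_le _ _) t.isLt⟩) (f t)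

lemma sliceT_subset_Iic (f : Fin m → Fin n) (t : Fin m) : sliceT f t ⊆ Finset.Iic (f t) := by
  unfold sliceT
  split
  · exact fun l hl => hl
  · intro l hl
    simp only [Finset.mem_Ioc] at hl
    exact Finset.mem_Iic.mpr hl.2

/-- strict monotone gap bound -/
lemma sm_gap {f : Fin m → Fin n} (hf : StrictMono f) (a b : Fin m) (hab : a ≤ b) :
    (f a).1 + (b.1 - a.1) ≤ (f b).1 := by
  obtain ⟨d, hd⟩ : ∃ d, a.1 + d = b.1 := ⟨b.1 - a.1, by omega⟩
  have main : ∀ d (b : Fin m), a.1 + d = b.1 → (f a).1 + d ≤ (f b).1 := by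
    intro d
    induction d with
    | zero => intro b hb; simp [show b = a from Fin.ext (by omega)]
    | succ d ih =>
      intro b hb
      have hb' : a.1 + d < m := by have := b.isLt; omega
      have h1 := ih ⟨a.1 + d, hb'⟩ rfl
      have h2 : f ⟨a.1 + d, hb'⟩ < f b := hf (by rw [Fin.lt_def]; simp; omega)
      have := Fin.lt_def.mp h2
      omega
  have := main d b hd
  omega

lemma partition (f : Fin m → Fin n) (hf : StrictMono f) (g : Fin n → k) (u : Fin m) :
    ∑ v ∈ Finset.Iic u, ∑ l ∈ sliceT f v, g l = ∑ l ∈ Finset.Iic (f u), g l := by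
  -- convert Iic sum over Fin m to range sum
  have key : ∀ w (hw : w < m),
      ∑ v ∈ Finset.Iic (⟨w, hw⟩ : Fin m), ∑ l ∈ sliceT f v, g l
        = ∑ l ∈ Finset.Iic (f ⟨w, hw⟩), g l := by
    intro w
    induction w with
    | zero =>
      intro hw
      have : Finset.Iic (⟨0, hw⟩ : Fin m) = {⟨0, hw⟩} := by
        ext v; simp [Fin.le_def, Fin.ext_iff, Nat.le_zero]
      rw [this, Finset.sum_singleton]
      unfold sliceT
      simp
    | succ w ih =>
      intro hw
      have hw' : w < m := by omega
      have hins : Finset.Iic (⟨w + 1, hw⟩ : Fin m)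
          = insert (⟨w + 1, hw⟩ : Fin m) (Finset.Iic (⟨w, hw'⟩ : Fin m)) := by
        ext v
        simp only [Finset.mem_Iic, Finset.mem_insert, Fin.le_def, Fin.ext_iff]
        omega
      have hnotmem : (⟨w + 1, hw⟩ : Fin m) ∉ Finset.Iic (⟨w, hw'⟩ : Fin m) := by
        simp [Fin.le_def]
      rw [hins, Finset.sum_insert hnotmem, ih hw']
      have hsliceT : sliceT f ⟨w + 1, hw⟩
          = Finset.Ioc (f ⟨w, hw'⟩) (f ⟨w + 1, hw⟩) := by
        unfold sliceT
        simp
      rw [hsliceT, add_comm]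
      have hle : f ⟨w, hw'⟩ ≤ f ⟨w + 1, hw⟩ := le_of_lt (hf (by simp [Fin.lt_def]))
      rw [← Finset.sum_union (by
        rw [Finset.disjoint_left]
        intro l hl hl'
        simp only [Finset.mem_Iic] at hl
        simp only [Finset.mem_Ioc] at hl'
        exact absurd hl (not_le.mpr hl'.1))]
      congr 1
      ext l
      simp only [Finset.mem_union, Finset.mem_Iic, Finset.mem_Ioc]
      constructor
      · rintro (h | h)
        · exact le_trans h hle
        · exact h.2
      · intro h
        rcases le_or_gt l (f ⟨w, hw'⟩) with h' | h'
        · exact Or.inl h'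
        · exact Or.inr ⟨h', h⟩
  simpa using key u.1 u.isLt

/-- The key determinant formula. -/
lemma det_submatrix (A : Matrix (Fin n) (Fin n) k)
    (hA : ∀ i j : Fin n, i < j → A i j = 0)
    (f : Fin m → Fin n) (hf : StrictMono f) :
    ((A * Cmat k n).submatrix f f).det = ∏ t : Fin m, ∑ l ∈ sliceT f t, A (f t) l := by
  set B : Matrix (Fin m) (Fin m) k := Matrix.of fun t u => ∑ l ∈ sliceT f u, A (f t) l with hB
  have hfact : (A * Cmat k n).submatrix f f = B * Cmat k m := by
    ext t u
    rw [Matrix.submatrix_apply, mulC_apply, mulC_apply,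
      ← partition f hf (fun l => A (f t) l) u]
    rfl
  have hBtri : B.BlockTriangular OrderDual.toDual := by
    intro t u htu
    simp only [OrderDual.toDual_lt_toDual] at htu
    -- t < u, show B t u = 0
    have hu0 : u.1 ≠ 0 := by
      have := Fin.lt_def.mp htu; omega
    show ∑ l ∈ sliceT f u, A (f t) l = 0
    apply Finset.sum_eq_zero
    intro l hl
    apply hA
    unfold sliceT at hl
    rw [dif_neg hu0] at hl
    simp only [Finset.mem_Ioc] at hl
    have hle : f t ≤ f ⟨u.1 - 1, Nat.lt_of_le_of_lt (Nat.sub_le _ _) u.isLt⟩ :=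
      hf.monotone (by simp [Fin.le_def]; have := Fin.lt_def.mp htu; omega)
    exact lt_of_le_of_lt hle hl.1
  have hCtri : (Cmat k m).BlockTriangular id := by
    intro t u htu
    simp only [id_eq] at htu
    simp [Cmat, not_le.mpr htu]
  rw [hfact, Matrix.det_mul, Matrix.det_of_lowerTriangular B hBtri,
    Matrix.det_of_upperTriangular hCtri]
  simp [Cmat, B]

end Aux

theorem stmt1 {k : Type*} [Field k] {n r : ℕ}
    (A A' : Matrix (Fin n) (Fin n) k)
    (hA : ∀ i j : Fin n, i < j → A i j = 0)
    (hA' : ∀ i j : Fin n, i < j → A' i j = 0)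
    (hagree : ∀ i j : Fin n, j ≤ i → r ≤ n - (i.val + 1) + (j.val + 1) → A i j = A' i j) :
    Pcoeff r A = Pcoeff r A' := by
  unfold Pcoeff
  apply Finset.sum_congr rfl
  intro s hs
  have hcard : s.card = r := (Finset.mem_powersetCard.mp hs).2
  set m := s.card with hm
  set f : Fin m → Fin n := fun i => s.orderEmbOfFin rfl i with hfdef
  have hf : StrictMono f := (s.orderEmbOfFin rfl).strictMono
  rw [det_submatrix A hA f hf, det_submatrix A' hA' f hf]
  apply Finset.prod_congr rfl
  intro t _
  apply Finset.sum_congr rfl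
  intro l hl
  have hl' : l ≤ f t := Finset.mem_Iic.mp (sliceT_subset_Iic f t hl)
  apply hagree _ _ hl'
  -- arithmetic bounds
  have hm0 : 0 < m := t.pos
  have hlast : t ≤ (⟨m - 1, by omega⟩ : Fin m) := by
    rw [Fin.le_def]; simp; omega
  have hub := sm_gap hf t ⟨m - 1, by omega⟩ hlast
  have hubn : (f ⟨m - 1, by omega⟩).1 < n := (f _).isLt
  have hlb : t.1 ≤ l.1 := by
    by_cases ht0 : t.1 = 0
    · omega
    · have hslice : l ∈ Finset.Ioc (f ⟨t.1 - 1, by omega⟩) (f t) := by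
        unfold sliceT at hl
        rwa [dif_neg ht0] at hl
      have h1 : (f ⟨t.1 - 1, by omega⟩).1 < l.1 :=
        Fin.lt_def.mp (Finset.mem_Ioc.mp hslice).1
      have h2 := sm_gap hf ⟨0, by omega⟩ ⟨t.1 - 1, by omega⟩ (by rw [Fin.le_def]; simp)
      simp at h2
      omega
  have hftn : (f t).1 < n := (f t).isLt
  simp only [Fin.val_mk] at hub hubn
  have htm : t.1 < m := t.isLt
  have hrm : r = m := hcard.symm
  omega
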